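/- arXiv:2603.26893 — 2 statements merged into one kernel-verified Lean document; each statement's English description precedes it below -/
import Mathlib

section
/- Let E = ((N_t, q_t))_{t∈[m]} be a request sequence with water-filling allocations (x_t)_{t∈[m]}, and let E^(1) = ((N_t \ I_t, q_t))_{t∈[m]}, where I_t = {i ∈ N_t : x_t(i) = 0} is the set of endpoints of inactive edges at online node t. Then WF(E) = WF(E^(1)). -/
open Finset MeasureTheory

/-- A request sequence with `n` offline nodes and `m` online nodes: each online
node `t` has a nonempty neighborhood `N t ⊆ [n]` and a positive quantity `q t`. -/
structure ReqSeq (n m : ℕ) where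
  N : Fin m → Finset (Fin n)
  q : Fin m → ℝ
  N_nonempty : ∀ t, (N t).Nonempty
  q_pos : ∀ t, 0 < q t

/-- `Δ(N, q)`: feasible allocations for a single online node. -/
def allocSet (n : ℕ) (N : Finset (Fin n)) (qt : ℝ) : Set (Fin n → ℝ) :=
  {x | (∀ i, 0 ≤ x i) ∧ (∀ i, i ∉ N → x i = 0) ∧ ∑ i, x i = qt}

/-- A feasible allocation trajectory on a request sequence. -/
def Feasible {n m : ℕ} (E : ReqSeq n m) (x : Fin m → Fin n → ℝ) : Prop :=
  ∀ t, x t ∈ allocSet n (E.N t) (E.q t)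

/-- `Δ(E)`: the Minkowski sum of the per-node allocation sets (feasible load vectors). -/
def loads {n m : ℕ} (E : ReqSeq n m) : Set (Fin n → ℝ) :=
  {ℓ | ∃ x, Feasible E x ∧ ℓ = ∑ t, x t}

/-- Sum of the `k` largest entries of `x`. -/
noncomputable def topSum {n : ℕ} (x : Fin n → ℝ) (k : ℕ) : ℝ :=
  sSup ((fun s : Finset (Fin n) => ∑ i ∈ s, x i) '' {s | s.card = k})

/-- `Majorizes x y` means `x ⪰ y`: equal total sums and every `k`-largest-entries
sum of `x` dominates that of `y`. -/
def Majorizes {n : ℕ} (x y : Fin n → ℝ) : Prop :=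
  (∑ i, x i = ∑ i, y i) ∧ ∀ k ≤ n, topSum y k ≤ topSum x k

/-- `f` is Schur-concave on the nonnegative orthant: `x ⪯ y → f x ≥ f y`. -/
def SchurConcave {n : ℕ} (f : (Fin n → ℝ) → ℝ) : Prop :=
  ∀ x y : Fin n → ℝ, (∀ i, 0 ≤ x i) → (∀ i, 0 ≤ y i) → Majorizes y x → f y ≤ f x

/-- `g` is Schur-convex on the nonnegative orthant: `x ⪯ y → g x ≤ g y`. -/
def SchurConvex {n : ℕ} (g : (Fin n → ℝ) → ℝ) : Prop :=
  ∀ x y : Fin n → ℝ, (∀ i, 0 ≤ x i) → (∀ i, 0 ≤ y i) → Majorizes y x → g x ≤ g y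

/-- Cumulative load strictly before online node `t`. -/
def prevLoad {n m : ℕ} (x : Fin m → Fin n → ℝ) (t : Fin m) : Fin n → ℝ :=
  fun i => ∑ s ∈ Finset.univ.filter (fun s => s < t), x s i

/-- Minimum of `v` over the neighborhood of online node `t`. -/
noncomputable def wfMinOn {n m : ℕ} (E : ReqSeq n m) (t : Fin m) (v : Fin n → ℝ) : ℝ :=
  (E.N t).inf' (E.N_nonempty t) v

/-- `x` is the water-filling allocation trajectory on `E`: at each arrival `t`,
`x t` maximizes the minimum post-allocation load over `N t`. -/
def IsWFAlloc {n m : ℕ} (E : ReqSeq n m) (x : Fin m → Fin n → ℝ) : Prop :=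
  Feasible E x ∧
  ∀ t, ∀ y ∈ allocSet n (E.N t) (E.q t),
    wfMinOn E t (fun i => y i + prevLoad x t i) ≤ wfMinOn E t (fun i => x t i + prevLoad x t i)

-- The load vector produced by water-filling (via choice; the trajectory exists and is unique).
open Classical in
noncomputable def wfLoad {n m : ℕ} (E : ReqSeq n m) : Fin n → ℝ :=
  if h : ∃ x, IsWFAlloc E x then ∑ t, h.choose t else 0

/-- `ℓ` is the majorization-minimal element of `Δ(E)`. -/
def IsOpt {n m : ℕ} (E : ReqSeq n m) (ℓ : Fin n → ℝ) : Prop :=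
  ℓ ∈ loads E ∧ ∀ ℓ' ∈ loads E, Majorizes ℓ' ℓ

-- `OPT(E)`, the majorization-minimal feasible load vector (via choice).
open Classical in
noncomputable def optLoad {n m : ℕ} (E : ReqSeq n m) : Fin n → ℝ :=
  if h : ∃ ℓ, IsOpt E ℓ then h.choose else 0

/-- A request sequence is nested if `N 1 ⊇ N 2 ⊇ ⋯ ⊇ N m`. -/
def IsNested {n m : ℕ} (E : ReqSeq n m) : Prop :=
  ∀ s t : Fin m, s ≤ t → E.N t ⊆ E.N s

/-- `E_{n,m,q}`: request sequences with total quantity `q`. -/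
def seqs (n m : ℕ) (q : ℝ) : Set (ReqSeq n m) := {E | ∑ t, E.q t = q}

/-- The harmonic-series matrix applied to a vector: `(Hℓ)(i) = Σ_{j ≤ i} ℓ(j)/(n − j + 1)`
(in 1-indexed notation). -/
noncomputable def Hvec (n : ℕ) (ℓ : Fin n → ℝ) : Fin n → ℝ :=
  fun i => ∑ j ∈ Finset.univ.filter (fun j => j ≤ i), ℓ j / ((n - (j : ℕ) : ℕ) : ℝ)

/-- The water-filling height of online node `t`: the common post-allocation load of
the offline nodes in the support of `x t`. -/
noncomputable def height {n m : ℕ} (x : Fin m → Fin n → ℝ) (t : Fin m) : ℝ :=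
  sSup {c | ∃ i, 0 < x t i ∧ c = x t i + prevLoad x t i}


lemma sum_on_eq {n : ℕ} (N : Finset (Fin n)) (x : Fin n → ℝ)
    (h : ∀ i ∉ N, x i = 0) : ∑ i ∈ N, x i = ∑ i, x i :=
  Finset.sum_subset (Finset.subset_univ N) (fun i _ hi => h i hi)

lemma lemA {n : ℕ} (N : Finset (Fin n)) (hN : N.Nonempty) (q : ℝ) (ℓ xv : Fin n → ℝ)
    (hx : xv ∈ allocSet n N q)
    (hopt : ∀ y ∈ allocSet n N q,
      N.inf' hN (fun i => y i + ℓ i) ≤ N.inf' hN (fun i => xv i + ℓ i))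
    (j : Fin n) (hj : j ∈ N) (hxj : 0 < xv j) :
    xv j + ℓ j = N.inf' hN (fun i => xv i + ℓ i) := by
  obtain ⟨hnn, hz, hs⟩ := hx
  set v := N.inf' hN (fun i => xv i + ℓ i) with hv
  have h1 : v ≤ xv j + ℓ j := Finset.inf'_le _ hj
  rcases eq_or_lt_of_le h1 with h | hlt
  · exact h.symm
  exfalso
  rcases Nat.lt_or_ge N.card 2 with hk | hk
  · -- N = {j}
    have hcard : N.card = 1 := le_antisymm (by omega) (Finset.card_pos.2 hN)
    obtain ⟨a, ha⟩ := Finset.card_eq_one.1 hcard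
    have hja : j = a := by simpa [ha] using hj
    have hva : v = xv j + ℓ j := by simp [hv, ha, hja]
    linarith
  · -- perturbation
    set k := N.card with hkdef
    have hkr : (0:ℝ) < (k:ℝ) - 1 := by
      have : (2:ℝ) ≤ (k:ℝ) := by exact_mod_cast hk
      linarith
    set ε := min (xv j) (xv j + ℓ j - v) / 2 with hε
    have hε1 : ε ≤ xv j / 2 := by
      have := min_le_left (xv j) (xv j + ℓ j - v); rw [hε]; linarith
    have hε2 : ε ≤ (xv j + ℓ j - v) / 2 := by
      have := min_le_right (xv j) (xv j + ℓ j - v); rw [hε]; linarith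
    have hεpos : 0 < ε := by
      rw [hε]
      have : 0 < min (xv j) (xv j + ℓ j - v) := lt_min hxj (by linarith)
      linarith
    set c := ε / ((k:ℝ) - 1) with hc
    have hcpos : 0 < c := div_pos hεpos hkr
    set y := fun i => if i = j then xv j - ε else if i ∈ N then xv i + c else 0 with hy
    have hyz : ∀ i ∉ N, y i = 0 := by
      intro i hi
      have : i ≠ j := fun h => hi (h ▸ hj)
      simp [hy, this, hi]
    have hymem : y ∈ allocSet n N q := by
      refine ⟨?_, hyz, ?_⟩
      · intro i
        by_cases h1 : i = j
        · simp only [hy, h1, if_pos rfl]; linarith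
        · by_cases h2 : i ∈ N
          · simp only [hy, if_neg h1, if_pos h2]
            have := hnn i; linarith
          · simp [hy, h1, h2]
      · have hsum : ∑ i ∈ N, y i = q := by
          rw [← Finset.add_sum_erase _ y hj]
          have hrest : ∀ i ∈ N.erase j, y i = xv i + c := by
            intro i hi
            have h1 : i ≠ j := Finset.ne_of_mem_erase hi
            have h2 : i ∈ N := Finset.mem_of_mem_erase hi
            simp [hy, h1, h2]
          rw [Finset.sum_congr rfl hrest, Finset.sum_add_distrib, Finset.sum_const,
            Finset.card_erase_of_mem hj]
          have hyj : y j = xv j - ε := by simp [hy]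
          have hNsum : ∑ i ∈ N.erase j, xv i = q - xv j := by
            have := Finset.add_sum_erase _ xv hj
            have hq : ∑ i ∈ N, xv i = q := by rw [sum_on_eq N xv hz]; exact hs
            linarith [this.symm ▸ hq]
          rw [hyj, hNsum]
          have hcast : ((k - 1 : ℕ) : ℝ) = (k:ℝ) - 1 := by
            have : 1 ≤ k := by omega
            push_cast [this]; ring
          rw [nsmul_eq_mul, hcast]
          have hce : ((k:ℝ) - 1) * c = ε := by
            rw [hc]; field_simp
          linarith
        rw [← sum_on_eq N y hyz]; exact hsum
    have hbig : v < N.inf' hN (fun i => y i + ℓ i) := by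
      rw [Finset.lt_inf'_iff]
      intro i hi
      by_cases h1 : i = j
      · subst h1
        have : y i = xv i - ε := by simp [hy]
        rw [this]; linarith
      · have : y i = xv i + c := by simp [hy, h1, hi]
        rw [this]
        have h2 : v ≤ xv i + ℓ i := Finset.inf'_le _ hi
        linarith
    have := hopt y hymem
    linarith


/-- **Proposition (Invariance under Inactive Edge Removal).** If `E^(1)` is obtained from
`E` by removing, at every online node `t`, the endpoints of edges that are inactive under
the water-filling allocation `x` of `E`, then `WF(E) = WF(E^(1))`. -/
theorem inactive_edge_removal (n m : ℕ) (E E1 : ReqSeq n m)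
    (x : Fin m → Fin n → ℝ) (hx : IsWFAlloc E x)
    (hN : ∀ t, E1.N t = (E.N t).filter (fun i => x t i ≠ 0))
    (hq : ∀ t, E1.q t = E.q t)
    (x1 : Fin m → Fin n → ℝ) (hx1 : IsWFAlloc E1 x1) :
    ∑ t, x t = ∑ t, x1 t := by
  obtain ⟨hfeas, hoptE⟩ := hx
  obtain ⟨hfeas1, hopt1⟩ := hx1
  have main : ∀ k : ℕ, ∀ t : Fin m, (t : ℕ) < k → x1 t = x t := by
    intro k
    induction k with
    | zero => intro t ht; omega
    | succ k ih =>
      intro t ht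
      have hprev : prevLoad x1 t = prevLoad x t := by
        funext i
        unfold prevLoad
        apply Finset.sum_congr rfl
        intro s hs
        have hst : s < t := (Finset.mem_filter.1 hs).2
        have hsk : (s : ℕ) < k := by
          have h1 : (s : ℕ) < (t : ℕ) := hst
          omega
        rw [ih s hsk]
      obtain ⟨hnn, hz, hs⟩ := hfeas t
      obtain ⟨hnn1, hz1, hs1⟩ := hfeas1 t
      have hqt := hq t
      have hmem1 : ∀ i, i ∈ E1.N t ↔ (i ∈ E.N t ∧ x t i ≠ 0) := by
        intro i; rw [hN t]; simp [Finset.mem_filter]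
      have hNtne := E.N_nonempty t
      have hN1ne := E1.N_nonempty t
      have hoptt : ∀ y ∈ allocSet n (E.N t) (E.q t),
          (E.N t).inf' hNtne (fun i => y i + prevLoad x t i) ≤
          (E.N t).inf' hNtne (fun i => x t i + prevLoad x t i) := by
        intro y hy
        exact hoptE t y hy
      have hc : ∀ i ∈ E1.N t,
          x t i + prevLoad x t i = (E.N t).inf' hNtne (fun i => x t i + prevLoad x t i) := by
        intro i hi
        obtain ⟨hiN, hine⟩ := (hmem1 i).1 hi
        exact lemA (E.N t) hNtne (E.q t) (prevLoad x t) (x t) ⟨hnn, hz, hs⟩ hoptt i hiN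
          (lt_of_le_of_ne (hnn i) (Ne.symm hine))
      have hxfeas1 : x t ∈ allocSet n (E1.N t) (E1.q t) := by
        refine ⟨hnn, ?_, by rw [hqt]; exact hs⟩
        intro i hi
        by_cases h : i ∈ E.N t
        · by_contra hne; exact hi ((hmem1 i).2 ⟨h, hne⟩)
        · exact hz i h
      have hv1le : (E1.N t).inf' hN1ne (fun i => x1 t i + prevLoad x t i) ≤
          (E.N t).inf' hNtne (fun i => x t i + prevLoad x t i) := by
        by_contra h
        push_neg at h
        have hlt : ∀ i ∈ E1.N t, x t i < x1 t i := by
          intro i hi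
          have h2 : (E1.N t).inf' hN1ne (fun i => x1 t i + prevLoad x t i) ≤
              x1 t i + prevLoad x t i := Finset.inf'_le _ hi
          have h3 := hc i hi
          linarith
        have hsum_lt : ∑ i ∈ E1.N t, x t i < ∑ i ∈ E1.N t, x1 t i :=
          Finset.sum_lt_sum_of_nonempty hN1ne hlt
        have e1 : ∑ i ∈ E1.N t, x t i = E.q t := by
          rw [sum_on_eq _ _ hxfeas1.2.1]; exact hs
        have e2 : ∑ i ∈ E1.N t, x1 t i = E.q t := by
          rw [sum_on_eq _ _ hz1, hs1, hqt]
        linarith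
      have hopt1t : ∀ y ∈ allocSet n (E1.N t) (E1.q t),
          (E1.N t).inf' hN1ne (fun i => y i + prevLoad x t i) ≤
          (E1.N t).inf' hN1ne (fun i => x1 t i + prevLoad x t i) := by
        intro y hy
        have h0 := hopt1 t y hy
        simp only [wfMinOn, hprev] at h0
        exact h0
      have hA1 : ∀ j ∈ E1.N t, 0 < x1 t j →
          x1 t j + prevLoad x t j = (E1.N t).inf' hN1ne (fun i => x1 t i + prevLoad x t i) :=
        fun j hj hpos =>
          lemA (E1.N t) hN1ne (E1.q t) (prevLoad x t) (x1 t) ⟨hnn1, hz1, hs1⟩ hopt1t j hj hpos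
      have hle : ∀ i, x1 t i ≤ x t i := by
        intro i
        by_cases hi : i ∈ E1.N t
        · rcases lt_or_eq_of_le (hnn1 i) with hp | hp
          · have h4 := hA1 i hi hp
            have h5 := hc i hi
            have h6 : (E.N t).inf' hNtne (fun i => x t i + prevLoad x t i) ≥
                (E1.N t).inf' hN1ne (fun i => x1 t i + prevLoad x t i) := hv1le
            linarith
          · rw [← hp]; exact hnn i
        · rw [hz1 i hi]; exact hnn i
      have hsums : ∑ i, x1 t i = ∑ i, x t i := by rw [hs1, hqt, hs]
      funext i
      exact (Finset.sum_eq_sum_iff_of_le (fun i _ => hle i)).1 hsums i (Finset.mem_univ i)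
  apply Finset.sum_congr rfl
  intro t _
  exact (main m t t.isLt).symm
end

section
/- Let E ∈ E_{n,m,q} be a request sequence that, under its water-filling allocation, has no inactive edges and whose online nodes arrive in non-decreasing order of water-filling height (h_1 ≤ h_2 ≤ ⋯ ≤ h_m). Then the nested sequence Ê induced by E satisfies WF(E) ⪯ WF(Ê). -/
open Finset MeasureTheory

set_option linter.unusedVariables false

section Nestify

variable {n m : ℕ}

lemma feas_nonneg {E : ReqSeq n m} {x : Fin m → Fin n → ℝ} (hx : Feasible E x)
    (t : Fin m) (i : Fin n) : 0 ≤ x t i := (hx t).1 i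

lemma feas_supp {E : ReqSeq n m} {x : Fin m → Fin n → ℝ} (hx : Feasible E x)
    {t : Fin m} {i : Fin n} (h : i ∉ E.N t) : x t i = 0 := (hx t).2.1 i h

lemma feas_sum {E : ReqSeq n m} {x : Fin m → Fin n → ℝ} (hx : Feasible E x)
    (t : Fin m) : ∑ i, x t i = E.q t := (hx t).2.2

lemma sum_on_N {E : ReqSeq n m} {x : Fin m → Fin n → ℝ} (hx : Feasible E x)
    (t : Fin m) : ∑ i ∈ E.N t, x t i = E.q t := by
  rw [← feas_sum hx t]
  exact Finset.sum_subset (Finset.subset_univ _) (fun i _ hi => feas_supp hx hi)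

lemma prevLoad_nonneg {E : ReqSeq n m} {x : Fin m → Fin n → ℝ} (hx : Feasible E x)
    (t : Fin m) (i : Fin n) : 0 ≤ prevLoad x t i :=
  Finset.sum_nonneg fun s _ => (hx s).1 i

lemma wf_post {E : ReqSeq n m} {x : Fin m → Fin n → ℝ} (hx : IsWFAlloc E x)
    (t : Fin m) {j : Fin n} (hj : j ∈ E.N t) (hpos : 0 < x t j) :
    x t j + prevLoad x t j = wfMinOn E t (fun i => x t i + prevLoad x t i) := by
  classical
  by_contra hne
  set g : Fin n → ℝ := fun i => x t i + prevLoad x t i with hg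
  have hml : wfMinOn E t g ≤ g j := Finset.inf'_le _ hj
  have hlt : wfMinOn E t g < g j := hml.lt_of_ne fun h => hne h.symm
  set I : ℝ := wfMinOn E t g with hI
  obtain ⟨i0, hi0, hIi0⟩ := Finset.exists_mem_eq_inf' (E.N_nonempty t) g
  have hIi0' : I = g i0 := hIi0
  have hne0 : i0 ≠ j := by
    intro h
    exact (ne_of_lt hlt) (h ▸ hIi0')
  have hcard2 : 1 < (E.N t).card := Finset.one_lt_card.mpr ⟨i0, hi0, j, hj, hne0⟩
  set c : ℕ := (E.N t).card with hc
  have hcm1 : 0 < c - 1 := by omega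
  have hcm1R : (0:ℝ) < ((c - 1 : ℕ) : ℝ) := by exact_mod_cast hcm1
  set ε : ℝ := min (x t j) ((g j - I)/2) with hε
  have hεpos : 0 < ε := lt_min hpos (half_pos (sub_pos.mpr hlt))
  have hεle1 : ε ≤ x t j := min_le_left _ _
  have hεle2 : ε ≤ (g j - I)/2 := min_le_right _ _
  set y : Fin n → ℝ := fun i => if i = j then x t j - ε
    else if i ∈ E.N t then x t i + ε / ((c - 1 : ℕ) : ℝ) else 0 with hy
  have hyalloc : y ∈ allocSet n (E.N t) (E.q t) := by
    refine ⟨?_, ?_, ?_⟩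
    · intro i
      by_cases h1 : i = j
      · simp only [hy, h1, if_pos rfl]; linarith
      · by_cases h2 : i ∈ E.N t
        · simp only [hy, if_neg h1, if_pos h2]
          have := feas_nonneg hx.1 t i
          positivity
        · simp only [hy, if_neg h1, if_neg h2]
          exact le_refl 0
    · intro i hi
      have h1 : i ≠ j := fun h => hi (h ▸ hj)
      simp only [hy, if_neg h1, if_neg hi]
    · have h1 : ∑ i, y i = ∑ i ∈ E.N t, y i :=
        (Finset.sum_subset (Finset.subset_univ _) (fun i _ hi => by
          have h1 : i ≠ j := fun h => hi (h ▸ hj)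
          simp only [hy, if_neg h1, if_neg hi])).symm
      rw [h1, ← Finset.add_sum_erase _ _ hj]
      have h2 : ∀ i ∈ (E.N t).erase j, y i = x t i + ε / ((c - 1 : ℕ) : ℝ) := by
        intro i hi
        have h3 := Finset.ne_of_mem_erase hi
        have h4 := Finset.mem_of_mem_erase hi
        simp [hy, h3, h4]
      rw [Finset.sum_congr rfl h2, Finset.sum_add_distrib, Finset.sum_const,
        Finset.card_erase_of_mem hj, nsmul_eq_mul]
      have h5 : ∑ i ∈ (E.N t).erase j, x t i = E.q t - x t j := by
        have := Finset.add_sum_erase _ (x t) hj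
        rw [sum_on_N hx.1 t] at this
        linarith
      have h6 : ((c - 1 : ℕ) : ℝ) * (ε / ((c - 1 : ℕ) : ℝ)) = ε := by
        rw [mul_comm, div_mul_cancel₀ _ (ne_of_gt hcm1R)]
      simp only [hy, if_pos rfl, h5]
      rw [h6]
      ring
  have hopt := hx.2 t y hyalloc
  have hbig : I < wfMinOn E t (fun i => y i + prevLoad x t i) := by
    rw [wfMinOn, Finset.lt_inf'_iff]
    intro i hi
    by_cases h1 : i = j
    · subst h1
      simp only [hy, if_pos rfl]
      have : g i = x t i + prevLoad x t i := rfl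
      linarith
    · simp only [hy, if_neg h1, if_pos hi]
      have h2 : I ≤ g i := Finset.inf'_le _ hi
      have h3 : g i = x t i + prevLoad x t i := rfl
      have h4 : 0 < ε / ((c - 1 : ℕ) : ℝ) := by positivity
      linarith
  have : wfMinOn E t (fun i => y i + prevLoad x t i) ≤ I := hopt
  linarith

end Nestify
section Nestify2

variable {n m : ℕ}

lemma post_eq {E : ReqSeq n m} {x : Fin m → Fin n → ℝ} (hx : IsWFAlloc E x)
    (hactive : ∀ t, ∀ i ∈ E.N t, 0 < x t i) (t : Fin m) {i : Fin n} (hi : i ∈ E.N t) :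
    x t i + prevLoad x t i = height x t := by
  have hall : ∀ j ∈ E.N t, x t j + prevLoad x t j
      = wfMinOn E t (fun i => x t i + prevLoad x t i) :=
    fun j hj => wf_post hx t hj (hactive t j hj)
  have hset : {c | ∃ i, 0 < x t i ∧ c = x t i + prevLoad x t i}
      = {wfMinOn E t (fun i => x t i + prevLoad x t i)} := by
    ext c
    simp only [Set.mem_setOf_eq, Set.mem_singleton_iff]
    constructor
    · rintro ⟨j, hjpos, rfl⟩
      have hjN : j ∈ E.N t := by
        by_contra h
        exact absurd (feas_supp hx.1 h) (ne_of_gt hjpos)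
      exact hall j hjN
    · rintro rfl
      obtain ⟨j, hjN⟩ := E.N_nonempty t
      exact ⟨j, hactive t j hjN, (hall j hjN).symm⟩
  rw [height, hset, csSup_singleton, ← hall i hi]

lemma height_nonneg {E : ReqSeq n m} {x : Fin m → Fin n → ℝ} (hx : IsWFAlloc E x)
    (hactive : ∀ t, ∀ i ∈ E.N t, 0 < x t i) (t : Fin m) : 0 ≤ height x t := by
  obtain ⟨i, hi⟩ := E.N_nonempty t
  rw [← post_eq hx hactive t hi]
  have h1 := prevLoad_nonneg hx.1 t i
  have h2 := feas_nonneg hx.1 t i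
  linarith

lemma xhat_char {Ehat : ReqSeq n m} {xhat : Fin m → Fin n → ℝ} (hxhat : IsWFAlloc Ehat xhat)
    (hnest : ∀ s t : Fin m, s ≤ t → Ehat.N t ⊆ Ehat.N s) :
    ∀ (t : Fin m) (i : Fin n),
      xhat t i = if i ∈ Ehat.N t then Ehat.q t / (Ehat.N t).card else 0 := by
  classical
  have main : ∀ v : ℕ, ∀ t : Fin m, t.val = v → ∀ i : Fin n,
      xhat t i = if i ∈ Ehat.N t then Ehat.q t / (Ehat.N t).card else 0 := by
    intro v
    induction v using Nat.strong_induction_on with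
    | _ v ih =>
      intro t htv i
      have IH : ∀ s : Fin m, s < t → ∀ i : Fin n,
          xhat s i = if i ∈ Ehat.N s then Ehat.q s / (Ehat.N s).card else 0 :=
        fun s hs i => ih s.val (htv ▸ hs) s rfl i
      have hcpos : 0 < ((Ehat.N t).card : ℝ) := by
        exact_mod_cast Finset.card_pos.mpr (Ehat.N_nonempty t)
      set V : ℝ := ∑ s ∈ Finset.univ.filter (fun s => s < t), Ehat.q s / (Ehat.N s).card with hV
      have hprev : ∀ i ∈ Ehat.N t, prevLoad xhat t i = V := by
        intro i hiA
        refine Finset.sum_congr rfl ?_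
        intro s hs
        have hslt : s < t := (Finset.mem_filter.mp hs).2
        rw [IH s hslt i, if_pos (hnest s t (le_of_lt hslt) hiA)]
      set y : Fin n → ℝ := fun i => if i ∈ Ehat.N t then Ehat.q t / (Ehat.N t).card else 0 with hy
      have hyalloc : y ∈ allocSet n (Ehat.N t) (Ehat.q t) := by
        refine ⟨?_, ?_, ?_⟩
        · intro i
          by_cases h : i ∈ Ehat.N t
          · simp only [hy, if_pos h]
            exact div_nonneg (le_of_lt (Ehat.q_pos t)) (le_of_lt hcpos)
          · simp only [hy, if_neg h]; exact le_refl 0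
        · intro i h; simp only [hy, if_neg h]
        · rw [Finset.sum_ite_mem, Finset.univ_inter, Finset.sum_const, nsmul_eq_mul,
            mul_div_cancel₀ _ (ne_of_gt hcpos)]
      have hypost : ∀ i ∈ Ehat.N t, y i + prevLoad xhat t i
          = Ehat.q t / (Ehat.N t).card + V := by
        intro i hi
        rw [hprev i hi]
        simp only [hy, if_pos hi]
      have hmin_y : wfMinOn Ehat t (fun i => y i + prevLoad xhat t i)
          = Ehat.q t / (Ehat.N t).card + V := by
        obtain ⟨j, hj⟩ := Ehat.N_nonempty t
        refine le_antisymm ((Finset.inf'_le _ hj).trans_eq (hypost j hj)) ?_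
        exact Finset.le_inf' _ _ (fun i hi => (hypost i hi).ge)
      have hopt := hxhat.2 t y hyalloc
      rw [hmin_y] at hopt
      have hpost_ge : ∀ i ∈ Ehat.N t,
          Ehat.q t / (Ehat.N t).card + V ≤ xhat t i + prevLoad xhat t i := by
        intro i hi
        exact hopt.trans (Finset.inf'_le _ hi)
      have hsum : ∑ i ∈ Ehat.N t, (xhat t i + prevLoad xhat t i)
          = Ehat.q t + (Ehat.N t).card * V := by
        rw [Finset.sum_add_distrib, sum_on_N hxhat.1 t]
        congr 1
        rw [Finset.sum_congr rfl hprev, Finset.sum_const, nsmul_eq_mul]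
      have heach : ∀ i ∈ Ehat.N t,
          xhat t i + prevLoad xhat t i = Ehat.q t / (Ehat.N t).card + V := by
        by_contra hcon
        push_neg at hcon
        obtain ⟨i0, hi0, hne⟩ := hcon
        have hstrict : Ehat.q t / (Ehat.N t).card + V < xhat t i0 + prevLoad xhat t i0 :=
          (hpost_ge i0 hi0).lt_of_ne hne.symm
        have hlt := Finset.sum_lt_sum hpost_ge ⟨i0, hi0, hstrict⟩
        rw [hsum, Finset.sum_const, nsmul_eq_mul, mul_add,
          mul_div_cancel₀ _ (ne_of_gt hcpos)] at hlt
        linarith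
      by_cases hiA : i ∈ Ehat.N t
      · rw [if_pos hiA]
        have h1 := heach i hiA
        have h2 := hprev i hiA
        linarith
      · rw [if_neg hiA]
        exact feas_supp hxhat.1 hiA
  exact fun t i => main t.val t rfl i

end Nestify2
noncomputable def fAux {n m : ℕ} (x : Fin m → Fin n → ℝ) : ℕ → ℝ :=
  fun τ => if h : 1 ≤ τ ∧ τ ≤ m then height x ⟨τ - 1, by omega⟩ else 0

section Nestify3

variable {n m : ℕ}

lemma fAux_succ {x : Fin m → Fin n → ℝ} (t : Fin m) : fAux x (t.val + 1) = height x t := by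
  have ht := t.isLt
  rw [fAux, dif_pos ⟨by omega, by omega⟩]
  congr 1

lemma fAux_zero (x : Fin m → Fin n → ℝ) : fAux x 0 = 0 := by
  rw [fAux, dif_neg]
  omega

lemma tele {x : Fin m → Fin n → ℝ} (t : Fin m) :
    height x t = ∑ ρ ∈ Finset.univ.filter (fun ρ : Fin m => ρ ≤ t),
      (fAux x (ρ.val + 1) - fAux x ρ.val) := by
  have ht := t.isLt
  have h1 : ∑ ρ ∈ Finset.univ.filter (fun ρ : Fin m => ρ ≤ t),
      (fAux x (ρ.val + 1) - fAux x ρ.val)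
      = ∑ j ∈ Finset.range (t.val + 1), (fAux x (j + 1) - fAux x j) := by
    rw [Finset.sum_filter]
    have h2 : ∀ ρ : Fin m, (if ρ ≤ t then (fAux x (ρ.val + 1) - fAux x ρ.val) else 0)
        = (fun j : ℕ => if j ≤ t.val then (fAux x (j + 1) - fAux x j) else 0) ρ.val := by
      intro ρ; simp only [Fin.le_def]
    rw [Finset.sum_congr rfl (fun ρ _ => h2 ρ),
      Fin.sum_univ_eq_sum_range (fun j : ℕ => if j ≤ t.val then (fAux x (j + 1) - fAux x j) else 0) m]
    rw [← Finset.sum_subset (Finset.range_subset_range.mpr (by omega : t.val + 1 ≤ m))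
      (fun j hj hnj => if_neg (by simp only [Finset.mem_range] at hj hnj; omega))]
    exact Finset.sum_congr rfl (fun j hj => if_pos (by simp only [Finset.mem_range] at hj; omega))
  rw [h1, Finset.sum_range_sub (fun j => fAux x j), fAux_zero, fAux_succ, sub_zero]

lemma delta_nonneg {E : ReqSeq n m} {x : Fin m → Fin n → ℝ} (hx : IsWFAlloc E x)
    (hactive : ∀ t, ∀ i ∈ E.N t, 0 < x t i)
    (hheights : ∀ t s : Fin m, t ≤ s → height x t ≤ height x s) (ρ : Fin m) :
    0 ≤ fAux x (ρ.val + 1) - fAux x ρ.val := by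
  have hρ := ρ.isLt
  rw [fAux_succ]
  by_cases h0 : ρ.val = 0
  · rw [fAux, dif_neg (by omega), sub_zero]
    exact height_nonneg hx hactive ρ
  · rw [fAux, dif_pos ⟨by omega, by omega⟩, sub_nonneg]
    exact hheights _ _ (by simp only [Fin.le_def]; omega)

lemma first_app (E : ReqSeq n m) (i : Fin n) (ρ : Fin m)
    (hex : ∃ s : Fin m, ρ ≤ s ∧ i ∈ E.N s) :
    ∃ t₀ : Fin m, (ρ ≤ t₀ ∧ i ∈ E.N t₀ ∧ ∀ s : Fin m, ρ ≤ s → s < t₀ → i ∉ E.N s) ∧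
      (∀ s : Fin m, i ∈ E.N s → ρ ≤ s → (∀ r : Fin m, ρ ≤ r → r < s → i ∉ E.N r) → s = t₀) ∧
      (∀ s : Fin m, ρ ≤ s → i ∈ E.N s → t₀ ≤ s) := by
  classical
  set A := Finset.univ.filter (fun s : Fin m => ρ ≤ s ∧ i ∈ E.N s) with hA
  have hAne : A.Nonempty := by
    obtain ⟨s, h1, h2⟩ := hex
    exact ⟨s, by simp [hA, h1, h2]⟩
  have hmm := Finset.mem_filter.mp (A.min'_mem hAne)
  have hminle : ∀ s : Fin m, ρ ≤ s → i ∈ E.N s → A.min' hAne ≤ s :=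
    fun s h1 h2 => A.min'_le s (by simp [hA, h1, h2])
  refine ⟨A.min' hAne, ⟨hmm.2.1, hmm.2.2, ?_⟩, ?_, hminle⟩
  · intro s hρs hlt hmem
    exact absurd hlt (not_lt.mpr (hminle s hρs hmem))
  · intro s hmem hρs hfresh
    rcases eq_or_lt_of_le (hminle s hρs hmem) with h | h
    · exact h.symm
    · exact absurd hmm.2.2 (hfresh _ hmm.2.1 h)

lemma sum_cond_eval {E : ReqSeq n m} (i : Fin n) (ρ : Fin m) (g : Fin m → ℝ)
    (hex : ∃ s : Fin m, ρ ≤ s ∧ i ∈ E.N s) :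
    ∃ t₀ : Fin m, ρ ≤ t₀ ∧ i ∈ E.N t₀ ∧ (∀ s : Fin m, ρ ≤ s → s < t₀ → i ∉ E.N s) ∧
      ∑ t : Fin m, (if i ∈ E.N t ∧ ρ ≤ t ∧ (∀ s : Fin m, ρ ≤ s → s < t → i ∉ E.N s)
        then g t else 0) = g t₀ := by
  classical
  obtain ⟨t₀, ⟨h1, h2, h3⟩, huniq, -⟩ := first_app E i ρ hex
  refine ⟨t₀, h1, h2, h3, ?_⟩
  have hz : ∀ b ∈ (Finset.univ : Finset (Fin m)), b ≠ t₀ →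
      (if i ∈ E.N b ∧ ρ ≤ b ∧ (∀ s : Fin m, ρ ≤ s → s < b → i ∉ E.N s) then g b else 0) = 0 := by
    intro b _ hb
    apply if_neg
    rintro ⟨c1, c2, c3⟩
    exact hb (huniq b c1 c2 c3)
  rw [Finset.sum_eq_single_of_mem t₀ (Finset.mem_univ t₀) hz, if_pos ⟨h2, h1, h3⟩]

lemma sum_cond_zero {E : ReqSeq n m} (i : Fin n) (ρ : Fin m) (g : Fin m → ℝ)
    (hnex : ¬ ∃ s : Fin m, ρ ≤ s ∧ i ∈ E.N s) :
    ∑ t : Fin m, (if i ∈ E.N t ∧ ρ ≤ t ∧ (∀ s : Fin m, ρ ≤ s → s < t → i ∉ E.N s)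
      then g t else 0) = 0 := by
  classical
  refine Finset.sum_eq_zero fun t _ => if_neg ?_
  rintro ⟨c1, c2, c3⟩
  exact hnex ⟨t, c2, c1⟩

end Nestify3
section Nestify4

variable {n m : ℕ}

lemma x_formula {E : ReqSeq n m} {x : Fin m → Fin n → ℝ} (hx : IsWFAlloc E x)
    (hactive : ∀ t, ∀ i ∈ E.N t, 0 < x t i) :
    ∀ (t : Fin m) (i : Fin n),
      x t i = ∑ ρ : Fin m, (if i ∈ E.N t ∧ ρ ≤ t ∧ (∀ s : Fin m, ρ ≤ s → s < t → i ∉ E.N s)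
        then fAux x (ρ.val + 1) - fAux x ρ.val else 0) := by
  classical
  have main : ∀ v : ℕ, ∀ t : Fin m, t.val = v → ∀ i : Fin n,
      x t i = ∑ ρ : Fin m, (if i ∈ E.N t ∧ ρ ≤ t ∧ (∀ s : Fin m, ρ ≤ s → s < t → i ∉ E.N s)
        then fAux x (ρ.val + 1) - fAux x ρ.val else 0) := by
    intro v
    induction v using Nat.strong_induction_on with
    | _ v ih =>
      intro t htv i
      have IH : ∀ s : Fin m, s < t → ∀ i : Fin n,
          x s i = ∑ ρ : Fin m, (if i ∈ E.N s ∧ ρ ≤ s ∧ (∀ r : Fin m, ρ ≤ r → r < s → i ∉ E.N r)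
            then fAux x (ρ.val + 1) - fAux x ρ.val else 0) :=
        fun s hs i => ih s.val (htv ▸ hs) s rfl i
      by_cases hiN : i ∈ E.N t
      · have hpost := post_eq hx hactive t hiN
        have hprev : prevLoad x t i = ∑ ρ : Fin m,
            (if (∃ s : Fin m, ρ ≤ s ∧ s < t ∧ i ∈ E.N s)
              then fAux x (ρ.val + 1) - fAux x ρ.val else 0) := by
          have e1 : prevLoad x t i = ∑ s ∈ Finset.univ.filter (fun s => s < t), x s i := rfl
          rw [e1, Finset.sum_congr rfl (fun s hs => IH s (Finset.mem_filter.mp hs).2 i),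
            Finset.sum_comm]
          refine Finset.sum_congr rfl (fun ρ _ => ?_)
          by_cases hex2 : ∃ s : Fin m, ρ ≤ s ∧ s < t ∧ i ∈ E.N s
          · rw [if_pos hex2]
            obtain ⟨w, hw1, hw2, hw3⟩ := hex2
            obtain ⟨t₀, ⟨h1, h2, h3⟩, huniq, hminle⟩ := first_app E i ρ ⟨w, hw1, hw3⟩
            have ht₀t : t₀ < t := lt_of_le_of_lt (hminle w hw1 hw3) hw2
            have hz : ∀ b ∈ Finset.univ.filter (fun s : Fin m => s < t), b ≠ t₀ →
                (if i ∈ E.N b ∧ ρ ≤ b ∧ (∀ r : Fin m, ρ ≤ r → r < b → i ∉ E.N r)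
                  then fAux x (ρ.val + 1) - fAux x ρ.val else 0) = 0 := by
              intro b _ hb
              apply if_neg
              rintro ⟨c1, c2, c3⟩
              exact hb (huniq b c1 c2 c3)
            have hmemf : t₀ ∈ Finset.univ.filter (fun s : Fin m => s < t) :=
              Finset.mem_filter.mpr ⟨Finset.mem_univ t₀, ht₀t⟩
            rw [Finset.sum_eq_single_of_mem t₀ hmemf hz, if_pos ⟨h2, h1, h3⟩]
          · rw [if_neg hex2]
            refine Finset.sum_eq_zero (fun s hs => if_neg ?_)
            rintro ⟨c1, c2, c3⟩
            exact hex2 ⟨s, c2, (Finset.mem_filter.mp hs).2, c1⟩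
        have hxti : x t i = height x t - prevLoad x t i := by linarith
        rw [hxti, tele (x := x) t, Finset.sum_filter, hprev, ← Finset.sum_sub_distrib]
        refine Finset.sum_congr rfl (fun ρ _ => ?_)
        by_cases hex2 : ∃ s : Fin m, ρ ≤ s ∧ s < t ∧ i ∈ E.N s
        · obtain ⟨w, hw1, hw2, hw3⟩ := hex2
          have hρt : ρ ≤ t := le_of_lt (lt_of_le_of_lt hw1 hw2)
          rw [if_pos (⟨w, hw1, hw2, hw3⟩ : ∃ s : Fin m, ρ ≤ s ∧ s < t ∧ i ∈ E.N s),
            if_pos hρt, if_neg, sub_self]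
          rintro ⟨-, -, c3⟩
          exact c3 w hw1 hw2 hw3
        · rw [if_neg hex2, sub_zero]
          by_cases hρt : ρ ≤ t
          · rw [if_pos hρt, if_pos ⟨hiN, hρt, fun s a b hc => hex2 ⟨s, a, b, hc⟩⟩]
          · rw [if_neg hρt, if_neg (fun h => hρt h.2.1)]
      · rw [feas_supp hx.1 hiN]
        exact (Finset.sum_eq_zero fun ρ _ => if_neg (fun h => hiN h.1)).symm
  exact fun t i => main t.val t rfl i

lemma load_formula {E Ehat : ReqSeq n m} {x : Fin m → Fin n → ℝ} (hx : IsWFAlloc E x)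
    (hactive : ∀ t, ∀ i ∈ E.N t, 0 < x t i)
    (hN : ∀ (t : Fin m) (i : Fin n), i ∈ Ehat.N t ↔ ∃ s : Fin m, t ≤ s ∧ i ∈ E.N s)
    (i : Fin n) :
    (∑ t, x t) i = ∑ ρ : Fin m,
      (if i ∈ Ehat.N ρ then fAux x (ρ.val + 1) - fAux x ρ.val else 0) := by
  classical
  rw [Finset.sum_apply,
    Finset.sum_congr rfl (fun t (_ : t ∈ Finset.univ) => x_formula hx hactive t i),
    Finset.sum_comm]
  refine Finset.sum_congr rfl (fun ρ _ => ?_)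
  by_cases hex : ∃ s : Fin m, ρ ≤ s ∧ i ∈ E.N s
  · obtain ⟨t₀, -, -, -, heval⟩ :=
      sum_cond_eval i ρ (fun _ => fAux x (ρ.val + 1) - fAux x ρ.val) hex
    rw [if_pos ((hN ρ i).mpr hex)]
    exact heval
  · rw [if_neg (fun h => hex ((hN ρ i).mp h))]
    exact sum_cond_zero i ρ (fun _ => fAux x (ρ.val + 1) - fAux x ρ.val) hex

end Nestify4
section Nestify5

variable {n m : ℕ}

lemma exists_shat {Ehat : ReqSeq n m} (hnest : ∀ s t : Fin m, s ≤ t → Ehat.N t ⊆ Ehat.N s)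
    (k : ℕ) (hk : k ≤ n) :
    ∃ shat : Finset (Fin n), shat.card = k ∧
      ∀ t : Fin m, (shat ∩ Ehat.N t).card = min k (Ehat.N t).card := by
  classical
  have huniv : k ≤ (Finset.univ : Finset (Fin n)).card := by
    rwa [Finset.card_univ, Fintype.card_fin]
  set T := Finset.univ.filter (fun t : Fin m => (Ehat.N t).card ≤ k) with hT
  by_cases hTne : T.Nonempty
  · set t₀ := T.min' hTne with ht₀
    have ht₀mem : (Ehat.N t₀).card ≤ k := (Finset.mem_filter.mp (T.min'_mem hTne)).2
    have hbig : ∀ t : Fin m, t < t₀ → k < (Ehat.N t).card := by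
      intro t ht
      by_contra hcon
      push_neg at hcon
      have := T.min'_le t (Finset.mem_filter.mpr ⟨Finset.mem_univ _, hcon⟩)
      exact absurd ht (not_lt.mpr this)
    by_cases h0 : t₀.val = 0
    · obtain ⟨u, hu1, hu2, hu3⟩ :=
        Finset.exists_subsuperset_card_eq (Finset.subset_univ (Ehat.N t₀)) ht₀mem huniv
      refine ⟨u, hu3, fun t => ?_⟩
      have htt : t₀ ≤ t := by
        rw [Fin.le_def]; omega
      have hsub : Ehat.N t ⊆ u := (hnest t₀ t htt).trans hu1
      rw [Finset.inter_eq_right.mpr hsub,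
        min_eq_right ((Finset.card_le_card (hnest t₀ t htt)).trans ht₀mem)]
    · have hval := t₀.isLt
      set p : Fin m := ⟨t₀.val - 1, by omega⟩ with hp
      have hpt₀ : p ≤ t₀ := by rw [Fin.le_def]; simp [hp]
      have hplt : p < t₀ := by rw [Fin.lt_def]; simp [hp]; omega
      have hpk : k < (Ehat.N p).card := hbig p hplt
      obtain ⟨u, hu1, hu2, hu3⟩ :=
        Finset.exists_subsuperset_card_eq (hnest p t₀ hpt₀) ht₀mem (le_of_lt hpk)
      refine ⟨u, hu3, fun t => ?_⟩
      rcases le_or_gt t₀ t with h | h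
      · have hsub : Ehat.N t ⊆ u := (hnest t₀ t h).trans hu1
        rw [Finset.inter_eq_right.mpr hsub,
          min_eq_right ((Finset.card_le_card (hnest t₀ t h)).trans ht₀mem)]
      · have htp : t ≤ p := by
          rw [Fin.le_def]; rw [Fin.lt_def] at h; simp [hp]; omega
        have hsub : u ⊆ Ehat.N t := hu2.trans (hnest t p htp)
        rw [Finset.inter_eq_left.mpr hsub, hu3, min_eq_left (le_of_lt (hbig t h))]
  · have hbig : ∀ t : Fin m, k < (Ehat.N t).card := by
      intro t
      by_contra hcon
      push_neg at hcon
      exact hTne ⟨t, Finset.mem_filter.mpr ⟨Finset.mem_univ _, hcon⟩⟩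
    by_cases hm : m = 0
    · obtain ⟨u, -, hu⟩ := Finset.exists_subset_card_eq huniv
      exact ⟨u, hu, fun t => absurd t.isLt (by omega)⟩
    · set last : Fin m := ⟨m - 1, by omega⟩ with hlastdef
      have hlast : ∀ t : Fin m, t ≤ last := by
        intro t
        have := t.isLt
        rw [Fin.le_def]; simp [hlastdef]; omega
      obtain ⟨u, hu1, hu2⟩ := Finset.exists_subset_card_eq (le_of_lt (hbig last))
      refine ⟨u, hu2, fun t => ?_⟩
      have hsub : u ⊆ Ehat.N t := hu1.trans (hnest t last (hlast t))
      rw [Finset.inter_eq_left.mpr hsub, hu2, min_eq_left (le_of_lt (hbig t))]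

lemma w_anti (k a b : ℕ) (ha : 0 < a) (hab : a ≤ b) :
    ((min k b : ℕ) : ℝ) / (b : ℝ) ≤ ((min k a : ℕ) : ℝ) / (a : ℝ) := by
  have hb : 0 < b := lt_of_lt_of_le ha hab
  rw [div_le_div_iff₀ (by exact_mod_cast hb) (by exact_mod_cast ha)]
  have key : min k b * a ≤ min k a * b := by
    rcases le_total k a with h | h
    · rw [min_eq_left h, min_eq_left (h.trans hab)]
      exact Nat.mul_le_mul_left k hab
    · calc min k b * a ≤ b * a := Nat.mul_le_mul_right a (min_le_right k b)
        _ = a * b := Nat.mul_comm b a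
        _ = min k a * b := by rw [min_eq_right h]
  exact_mod_cast key

end Nestify5

/-- **Lemma (Nestification).** Let `E ∈ E_{n,m,q}` be a sequence which, under its
water-filling allocation, has no inactive edges and online nodes arriving in
non-decreasing order of height. Then the induced nested sequence `Ê`
(with `N̂_t = {i : t ≤ μ_i}`, i.e. `i ∈ N̂_t ↔ ∃ s ≥ t, i ∈ N_s`, and `q̂_t = q_t`)
satisfies `WF(E) ⪯ WF(Ê)`. -/
theorem nestification (n m : ℕ) (q : ℝ) (E : ReqSeq n m) (hEq : E ∈ seqs n m q)
    (x : Fin m → Fin n → ℝ) (hx : IsWFAlloc E x)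
    (hactive : ∀ t, ∀ i ∈ E.N t, 0 < x t i)
    (hheights : ∀ t s : Fin m, t ≤ s → height x t ≤ height x s)
    (Ehat : ReqSeq n m)
    (hN : ∀ (t : Fin m) (i : Fin n), i ∈ Ehat.N t ↔ ∃ s : Fin m, t ≤ s ∧ i ∈ E.N s)
    (hq : ∀ t, Ehat.q t = E.q t)
    (xhat : Fin m → Fin n → ℝ) (hxhat : IsWFAlloc Ehat xhat) :
    Majorizes (∑ t, xhat t) (∑ t, x t) := by
  classical
  have hnest : ∀ s t : Fin m, s ≤ t → Ehat.N t ⊆ Ehat.N s := by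
    intro s t hst i hi
    rw [hN] at hi ⊢
    obtain ⟨r, hr1, hr2⟩ := hi
    exact ⟨r, le_trans hst hr1, hr2⟩
  have hchar := xhat_char hxhat hnest
  have hδ0 : ∀ ρ : Fin m, 0 ≤ fAux x (ρ.val + 1) - fAux x ρ.val :=
    delta_nonneg hx hactive hheights
  have hcpos : ∀ t : Fin m, 0 < ((Ehat.N t).card : ℝ) :=
    fun t => by exact_mod_cast Finset.card_pos.mpr (Ehat.N_nonempty t)
  constructor
  · have e1 : ∑ i, (∑ t, xhat t) i = ∑ t, Ehat.q t := by
      simp only [Finset.sum_apply]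
      rw [Finset.sum_comm]
      exact Finset.sum_congr rfl fun t _ => feas_sum hxhat.1 t
    have e2 : ∑ i, (∑ t, x t) i = ∑ t, E.q t := by
      simp only [Finset.sum_apply]
      rw [Finset.sum_comm]
      exact Finset.sum_congr rfl fun t _ => feas_sum hx.1 t
    rw [e1, e2]
    exact Finset.sum_congr rfl fun t _ => hq t
  · intro k hk
    have huniv : k ≤ (Finset.univ : Finset (Fin n)).card := by
      rwa [Finset.card_univ, Fintype.card_fin]
    obtain ⟨shat, hscard, hsinter⟩ := exists_shat hnest k hk
    have hBval : ∑ i ∈ shat, (∑ t, xhat t) i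
        = ∑ t : Fin m, ((min k (Ehat.N t).card : ℕ) : ℝ) * (E.q t / (Ehat.N t).card) := by
      have e0 : ∑ i ∈ shat, (∑ t, xhat t) i = ∑ t : Fin m, ∑ i ∈ shat, xhat t i := by
        simp only [Finset.sum_apply]
        exact Finset.sum_comm
      rw [e0]
      refine Finset.sum_congr rfl fun t _ => ?_
      have e1 : ∑ i ∈ shat, xhat t i
          = ∑ i ∈ shat, (if i ∈ Ehat.N t then Ehat.q t / (Ehat.N t).card else 0) :=
        Finset.sum_congr rfl fun i _ => hchar t i
      rw [e1, Finset.sum_ite_mem, Finset.sum_const, hsinter t, nsmul_eq_mul, hq]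
    have hKey : ∀ s : Finset (Fin n), s.card = k →
        ∑ i ∈ s, (∑ t, x t) i ≤ ∑ i ∈ shat, (∑ t, xhat t) i := by
      intro s hs
      have hL : ∑ i ∈ s, (∑ t, x t) i
          = ∑ ρ : Fin m, ((s ∩ Ehat.N ρ).card : ℝ) * (fAux x (ρ.val + 1) - fAux x ρ.val) := by
        rw [Finset.sum_congr rfl fun i (_ : i ∈ s) => load_formula hx hactive hN i,
          Finset.sum_comm]
        refine Finset.sum_congr rfl fun ρ _ => ?_
        rw [Finset.sum_ite_mem, Finset.sum_const, nsmul_eq_mul]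
      have hmidsum : ∑ ρ : Fin m, ((s ∩ Ehat.N ρ).card : ℝ) * (fAux x (ρ.val + 1) - fAux x ρ.val)
          ≤ ∑ ρ : Fin m, ((min k (Ehat.N ρ).card : ℕ) : ℝ)
              * (fAux x (ρ.val + 1) - fAux x ρ.val) := by
        refine Finset.sum_le_sum fun ρ _ => mul_le_mul_of_nonneg_right ?_ (hδ0 ρ)
        have c1 : (s ∩ Ehat.N ρ).card ≤ k := hs ▸ Finset.card_le_card Finset.inter_subset_left
        have c2 : (s ∩ Ehat.N ρ).card ≤ (Ehat.N ρ).card :=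
          Finset.card_le_card Finset.inter_subset_right
        exact_mod_cast le_min c1 c2
      have hR : ∑ ρ : Fin m, ((min k (Ehat.N ρ).card : ℕ) : ℝ)
            * (fAux x (ρ.val + 1) - fAux x ρ.val)
          ≤ ∑ i ∈ shat, (∑ t, xhat t) i := by
        have hRHS : ∑ t : Fin m, ((min k (Ehat.N t).card : ℕ) : ℝ) * (E.q t / (Ehat.N t).card)
            = ∑ ρ : Fin m, ∑ i : Fin n, ∑ t : Fin m,
              (if i ∈ E.N t ∧ ρ ≤ t ∧ (∀ s' : Fin m, ρ ≤ s' → s' < t → i ∉ E.N s')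
                then (fAux x (ρ.val + 1) - fAux x ρ.val)
                  * (((min k (Ehat.N t).card : ℕ) : ℝ) / (Ehat.N t).card) else 0) := by
          have step1 : ∀ t : Fin m, ((min k (Ehat.N t).card : ℕ) : ℝ) * (E.q t / (Ehat.N t).card)
              = ∑ i : Fin n, x t i * (((min k (Ehat.N t).card : ℕ) : ℝ) / (Ehat.N t).card) := by
            intro t
            rw [← Finset.sum_mul, feas_sum hx.1 t]
            ring
          have step2 : ∀ (t : Fin m) (i : Fin n),
              x t i * (((min k (Ehat.N t).card : ℕ) : ℝ) / (Ehat.N t).card)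
              = ∑ ρ : Fin m,
                (if i ∈ E.N t ∧ ρ ≤ t ∧ (∀ s' : Fin m, ρ ≤ s' → s' < t → i ∉ E.N s')
                  then (fAux x (ρ.val + 1) - fAux x ρ.val)
                    * (((min k (Ehat.N t).card : ℕ) : ℝ) / (Ehat.N t).card) else 0) := by
            intro t i
            rw [x_formula hx hactive t i, Finset.sum_mul]
            refine Finset.sum_congr rfl fun ρ _ => ?_
            rw [ite_mul, zero_mul]
          calc ∑ t : Fin m, ((min k (Ehat.N t).card : ℕ) : ℝ) * (E.q t / (Ehat.N t).card)
              = ∑ t : Fin m, ∑ i : Fin n, ∑ ρ : Fin m,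
                (if i ∈ E.N t ∧ ρ ≤ t ∧ (∀ s' : Fin m, ρ ≤ s' → s' < t → i ∉ E.N s')
                  then (fAux x (ρ.val + 1) - fAux x ρ.val)
                    * (((min k (Ehat.N t).card : ℕ) : ℝ) / (Ehat.N t).card) else 0) := by
                refine Finset.sum_congr rfl fun t _ => ?_
                rw [step1 t]
                exact Finset.sum_congr rfl fun i _ => step2 t i
            _ = ∑ i : Fin n, ∑ t : Fin m, ∑ ρ : Fin m,
                (if i ∈ E.N t ∧ ρ ≤ t ∧ (∀ s' : Fin m, ρ ≤ s' → s' < t → i ∉ E.N s')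
                  then (fAux x (ρ.val + 1) - fAux x ρ.val)
                    * (((min k (Ehat.N t).card : ℕ) : ℝ) / (Ehat.N t).card) else 0) :=
                Finset.sum_comm
            _ = ∑ i : Fin n, ∑ ρ : Fin m, ∑ t : Fin m,
                (if i ∈ E.N t ∧ ρ ≤ t ∧ (∀ s' : Fin m, ρ ≤ s' → s' < t → i ∉ E.N s')
                  then (fAux x (ρ.val + 1) - fAux x ρ.val)
                    * (((min k (Ehat.N t).card : ℕ) : ℝ) / (Ehat.N t).card) else 0) :=
                Finset.sum_congr rfl fun i _ => Finset.sum_comm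
            _ = ∑ ρ : Fin m, ∑ i : Fin n, ∑ t : Fin m,
                (if i ∈ E.N t ∧ ρ ≤ t ∧ (∀ s' : Fin m, ρ ≤ s' → s' < t → i ∉ E.N s')
                  then (fAux x (ρ.val + 1) - fAux x ρ.val)
                    * (((min k (Ehat.N t).card : ℕ) : ℝ) / (Ehat.N t).card) else 0) :=
                Finset.sum_comm
        have hlow : ∀ (ρ : Fin m) (i : Fin n),
            (if i ∈ Ehat.N ρ then (fAux x (ρ.val + 1) - fAux x ρ.val)
              * (((min k (Ehat.N ρ).card : ℕ) : ℝ) / (Ehat.N ρ).card) else 0)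
            ≤ ∑ t : Fin m,
              (if i ∈ E.N t ∧ ρ ≤ t ∧ (∀ s' : Fin m, ρ ≤ s' → s' < t → i ∉ E.N s')
                then (fAux x (ρ.val + 1) - fAux x ρ.val)
                  * (((min k (Ehat.N t).card : ℕ) : ℝ) / (Ehat.N t).card) else 0) := by
          intro ρ i
          by_cases hmem : i ∈ Ehat.N ρ
          · obtain ⟨t₀, h1, h2, h3, heval⟩ := sum_cond_eval i ρ
              (fun t => (fAux x (ρ.val + 1) - fAux x ρ.val)
                * (((min k (Ehat.N t).card : ℕ) : ℝ) / (Ehat.N t).card)) ((hN ρ i).mp hmem)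
            rw [if_pos hmem, heval]
            refine mul_le_mul_of_nonneg_left ?_ (hδ0 ρ)
            exact w_anti k (Ehat.N t₀).card (Ehat.N ρ).card
              (Finset.card_pos.mpr (Ehat.N_nonempty t₀))
              (Finset.card_le_card (hnest ρ t₀ h1))
          · rw [if_neg hmem]
            refine Finset.sum_nonneg fun t _ => ?_
            split
            · exact mul_nonneg (hδ0 ρ) (div_nonneg (Nat.cast_nonneg _) (Nat.cast_nonneg _))
            · exact le_refl 0
        rw [hBval, hRHS]
        calc ∑ ρ : Fin m, ((min k (Ehat.N ρ).card : ℕ) : ℝ)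
              * (fAux x (ρ.val + 1) - fAux x ρ.val)
            = ∑ ρ : Fin m, ∑ i : Fin n,
              (if i ∈ Ehat.N ρ then (fAux x (ρ.val + 1) - fAux x ρ.val)
                * (((min k (Ehat.N ρ).card : ℕ) : ℝ) / (Ehat.N ρ).card) else 0) := by
              refine Finset.sum_congr rfl fun ρ _ => ?_
              rw [Finset.sum_ite_mem, Finset.univ_inter, Finset.sum_const, nsmul_eq_mul]
              have hcne : ((Ehat.N ρ).card : ℝ) ≠ 0 := ne_of_gt (hcpos ρ)
              field_simp
          _ ≤ ∑ ρ : Fin m, ∑ i : Fin n, ∑ t : Fin m,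
              (if i ∈ E.N t ∧ ρ ≤ t ∧ (∀ s' : Fin m, ρ ≤ s' → s' < t → i ∉ E.N s')
                then (fAux x (ρ.val + 1) - fAux x ρ.val)
                  * (((min k (Ehat.N t).card : ℕ) : ℝ) / (Ehat.N t).card) else 0) :=
              Finset.sum_le_sum fun ρ _ => Finset.sum_le_sum fun i _ => hlow ρ i
      rw [hL]
      exact le_trans hmidsum hR
    obtain ⟨s0, -, hs0⟩ := Finset.exists_subset_card_eq huniv
    have hne : {s : Finset (Fin n) | s.card = k}.Nonempty := ⟨s0, hs0⟩
    have h1 : topSum (∑ t, x t) k ≤ ∑ i ∈ shat, (∑ t, xhat t) i := by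
      refine csSup_le (hne.image _) ?_
      rintro b ⟨s, hsk, rfl⟩
      exact hKey s hsk
    have h2 : ∑ i ∈ shat, (∑ t, xhat t) i ≤ topSum (∑ t, xhat t) k := by
      refine le_csSup ?_ ⟨shat, hscard, rfl⟩
      exact Set.Finite.bddAbove (Set.Finite.image _ (Set.toFinite _))
    linarith
end
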